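/- Let f_1, ..., f_n : ℝ → ℝ be convex functions with all subgradients bounded in absolute value by L. Let x* minimize F(x) = ∑_i f_i(x). Define y(t+1) = y(t) − (α(t)/n) ∑_i g_i(t) where g_i(t) ∈ ∂f_i(x_i(t)) for arbitrary points x_i(t), and let ŷ(T) = (∑_{t=0}^T α(t))^{-1} ∑_{t=0}^T α(t) y(t). Then ∑_i f_i(ŷ(T)) − ∑_i f_i(x*) ≤ [n(y(0)−x*)² + nL² ∑_{t=0}^T α(t)²]/(2∑_{t=0}^T α(t)) + (2L/∑_{t=0}^T α(t)) ∑_{t=0}^T α(t) ∑_i |y(t) − x_i(t)|. -/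

import Mathlib

open Finset

/-- `g` is a subgradient of `f` at `x`. -/
def IsSubgradient (f : ℝ → ℝ) (x g : ℝ) : Prop :=
  ∀ y : ℝ, f x + g * (y - x) ≤ f y

lemma exists_subgradient {f : ℝ → ℝ} (hf : ConvexOn ℝ Set.univ f) (p : ℝ) :
    ∃ g, IsSubgradient f p g := by
  set SL : Set ℝ := (fun z => (f p - f z) / (p - z)) '' Set.Iio p with hSL
  have hne : SL.Nonempty := ⟨_, ⟨p - 1, by simp, rfl⟩⟩
  have key : ∀ a < p, ∀ b, p < b → (f p - f a) / (p - a) ≤ (f b - f p) / (b - p) := by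
    intro a ha b hb
    have h := hf.slope_mono_adjacent (Set.mem_univ a) (Set.mem_univ b) ha hb
    convert h using 2 <;> ring
  have hub : ∀ b, p < b → (f b - f p) / (b - p) ∈ upperBounds SL := by
    intro b hb s hs
    obtain ⟨a, ha, rfl⟩ := hs
    exact key a ha b hb
  have hbdd : BddAbove SL := ⟨_, hub (p + 1) (by linarith)⟩
  refine ⟨sSup SL, fun z => ?_⟩
  rcases lt_trichotomy z p with hz | rfl | hz
  · have hle : (f p - f z) / (p - z) ≤ sSup SL := le_csSup hbdd ⟨z, hz, rfl⟩
    have hpz : 0 < p - z := by linarith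
    rw [div_le_iff₀ hpz] at hle
    nlinarith
  · simp
  · have hge : sSup SL ≤ (f z - f p) / (z - p) := csSup_le hne (hub z hz)
    have hpz : 0 < z - p := by linarith
    rw [le_div_iff₀ hpz] at hge
    nlinarith

lemma lipschitz_of_subgradient_bound {f : ℝ → ℝ} (hf : ConvexOn ℝ Set.univ f) {L : ℝ}
    (hB : ∀ x g, IsSubgradient f x g → |g| ≤ L) (a b : ℝ) :
    f b - f a ≤ L * |b - a| := by
  obtain ⟨gb, hgb⟩ := exists_subgradient hf b
  have h1 := hgb a
  have h2 : gb * (b - a) ≤ |gb * (b - a)| := le_abs_self _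
  have h3 : |gb * (b - a)| ≤ L * |b - a| := by
    rw [abs_mul]
    exact mul_le_mul_of_nonneg_right (hB b gb hgb) (abs_nonneg _)
  nlinarith

/-- Suboptimality bound for the ergodic average of the auxiliary sequence: for convex
`f_i` with subgradients bounded by `L`, minimizer `x*` of `∑_i f_i`, arbitrary points
`x_i(t)`, subgradients `g_i(t) ∈ ∂f_i(x_i(t))`, the sequence
`y(t+1) = y(t) − (α(t)/n) ∑_i g_i(t)` and its ergodic average
`ŷ(T) = (∑_{t≤T} α(t))⁻¹ ∑_{t≤T} α(t) y(t)` satisfy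
`∑_i f_i(ŷ(T)) − ∑_i f_i(x*) ≤ [n(y(0)−x*)² + nL² ∑ α(t)²]/(2 ∑ α(t))
  + (2L/∑ α(t)) ∑_t α(t) ∑_i |y(t) − x_i(t)|`. -/
theorem ergodic_average_suboptimality {n : ℕ} (hn : 0 < n)
    (f : Fin n → ℝ → ℝ) (hconv : ∀ i, ConvexOn ℝ Set.univ (f i))
    {L : ℝ} (hL : 0 < L)
    (hbdd : ∀ i x g, IsSubgradient (f i) x g → |g| ≤ L)
    (xstar : ℝ) (hmin : ∀ x : ℝ, ∑ i, f i xstar ≤ ∑ i, f i x)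
    (α : ℕ → ℝ) (hα : ∀ t, 0 < α t)
    (x : Fin n → ℕ → ℝ) (g : Fin n → ℕ → ℝ)
    (hg : ∀ i t, IsSubgradient (f i) (x i t) (g i t))
    (y : ℕ → ℝ)
    (hy : ∀ t : ℕ, y (t + 1) = y t - (α t / n) * ∑ i, g i t)
    (T : ℕ) :
    ∑ i, f i ((∑ t ∈ Finset.range (T + 1), α t)⁻¹ *
        ∑ t ∈ Finset.range (T + 1), α t * y t) - ∑ i, f i xstar ≤
      (n * (y 0 - xstar) ^ 2 + n * L ^ 2 * ∑ t ∈ Finset.range (T + 1), (α t) ^ 2) /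
          (2 * ∑ t ∈ Finset.range (T + 1), α t) +
        (2 * L / ∑ t ∈ Finset.range (T + 1), α t) *
          ∑ t ∈ Finset.range (T + 1), α t * ∑ i, |y t - x i t| := by
  have hNpos : (0:ℝ) < (n:ℝ) := by exact_mod_cast hn
  set N : ℝ := (n : ℝ) with hNdef
  set F : ℝ → ℝ := fun z => ∑ i, f i z with hFdef
  have hgb : ∀ i t, |g i t| ≤ L := fun i t => hbdd i _ _ (hg i t)
  -- per-step inequality
  have step : ∀ t, α t * (F (y t) - F xstar) ≤
      N/2 * ((y t - xstar)^2 - (y (t+1) - xstar)^2) + N*L^2*(α t)^2/2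
        + 2*L*(α t)*(∑ i, |y t - x i t|) := by
    intro t
    have hsum : (F (y t) - F xstar) - 2*L*(∑ i, |y t - x i t|) ≤
        (∑ i, g i t) * (y t - xstar) := by
      have key : ∀ i : Fin n, f i (y t) - f i xstar - 2*L*|y t - x i t| ≤
          g i t * (y t - xstar) := by
        intro i
        have h2 := hg i t xstar
        have h3 : |g i t * (y t - x i t)| ≤ L * |y t - x i t| := by
          rw [abs_mul]
          exact mul_le_mul_of_nonneg_right (hgb i t) (abs_nonneg _)
        have h4 := abs_le.mp h3
        have h5 : f i (y t) - f i (x i t) ≤ L * |y t - x i t| :=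
          lipschitz_of_subgradient_bound (hconv i) (hbdd i) (x i t) (y t)
        linarith [h2, h4.1, h5]
      calc F (y t) - F xstar - 2*L*(∑ i, |y t - x i t|)
          = ∑ i, (f i (y t) - f i xstar - 2*L*|y t - x i t|) := by
            simp [hFdef, Finset.sum_sub_distrib, Finset.mul_sum]
        _ ≤ ∑ i, g i t * (y t - xstar) := Finset.sum_le_sum (fun i _ => key i)
        _ = (∑ i, g i t) * (y t - xstar) := (Finset.sum_mul _ _ _).symm
    have hG : |∑ i, g i t| ≤ N * L := by
      calc |∑ i, g i t| ≤ ∑ i, |g i t| := Finset.abs_sum_le_sum_abs _ _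
        _ ≤ ∑ _i : Fin n, L := Finset.sum_le_sum (fun i _ => hgb i t)
        _ = N * L := by simp [mul_comm, hNdef]
    have hG2 : (∑ i, g i t)^2 ≤ (N*L)^2 := by
      have := abs_le.mp hG
      nlinarith [this.1, this.2]
    have hrec := hy t
    have hat := hα t
    have hB2 : (y (t+1) - xstar)^2 = (y t - xstar)^2
        - 2*(α t / N)*(∑ i, g i t)*(y t - xstar) + (α t / N)^2*(∑ i, g i t)^2 := by
      rw [hrec]; ring
    have hmul : α t * ((F (y t) - F xstar) - 2*L*(∑ i, |y t - x i t|)) ≤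
        α t * ((∑ i, g i t) * (y t - xstar)) :=
      mul_le_mul_of_nonneg_left hsum (le_of_lt hat)
    have hNne : N ≠ 0 := ne_of_gt hNpos
    have hdiv : N/2 * ((y t - xstar)^2 - (y (t+1) - xstar)^2)
        = α t * ((∑ i, g i t) * (y t - xstar)) - (α t)^2 * (∑ i, g i t)^2 / (2*N) := by
      rw [hB2]; field_simp; ring
    have hq : (α t)^2 * (∑ i, g i t)^2 / (2*N) ≤ N*L^2*(α t)^2/2 := by
      rw [div_le_iff₀ (by positivity)]
      nlinarith [sq_nonneg (α t), mul_le_mul_of_nonneg_left hG2 (sq_nonneg (α t))]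
    nlinarith [hmul, hdiv, hq]
  -- sum and telescope
  set S : ℝ := ∑ t ∈ Finset.range (T + 1), α t with hSdef
  have hApos : 0 < S := Finset.sum_pos (fun t _ => hα t) (by simp)
  have hAne : S ≠ 0 := ne_of_gt hApos
  have sum_step : ∑ t ∈ Finset.range (T+1), α t * (F (y t) - F xstar) ≤
      N/2*(y 0 - xstar)^2 + N*L^2/2 * (∑ t ∈ Finset.range (T+1), (α t)^2)
        + 2*L*(∑ t ∈ Finset.range (T+1), α t * ∑ i, |y t - x i t|) := by
    calc ∑ t ∈ Finset.range (T+1), α t * (F (y t) - F xstar)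
        ≤ ∑ t ∈ Finset.range (T+1), (N/2 * ((y t - xstar)^2 - (y (t+1) - xstar)^2)
            + N*L^2*(α t)^2/2 + 2*L*(α t)*(∑ i, |y t - x i t|)) :=
          Finset.sum_le_sum (fun t _ => step t)
      _ = N/2 * ((y 0 - xstar)^2 - (y (T+1) - xstar)^2)
            + ∑ t ∈ Finset.range (T+1), N*L^2*(α t)^2/2
            + ∑ t ∈ Finset.range (T+1), 2*L*(α t)*(∑ i, |y t - x i t|) := by
          rw [Finset.sum_add_distrib, Finset.sum_add_distrib, ← Finset.mul_sum,
            Finset.sum_range_sub' (fun t => (y t - xstar)^2)]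
      _ ≤ N/2*(y 0 - xstar)^2 + N*L^2/2 * (∑ t ∈ Finset.range (T+1), (α t)^2)
            + 2*L*(∑ t ∈ Finset.range (T+1), α t * ∑ i, |y t - x i t|) := by
          rw [Finset.mul_sum, Finset.mul_sum]
          have h1 : ∑ t ∈ Finset.range (T+1), N*L^2*(α t)^2/2
              = ∑ t ∈ Finset.range (T+1), N*L^2/2*(α t)^2 := by
            apply Finset.sum_congr rfl; intro t _; ring
          have h2 : ∑ t ∈ Finset.range (T+1), 2*L*(α t)*(∑ i, |y t - x i t|)
              = ∑ t ∈ Finset.range (T+1), 2*L*(α t * ∑ i, |y t - x i t|) := by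
            apply Finset.sum_congr rfl; intro t _; ring
          rw [h1, h2]
          nlinarith [sq_nonneg (y (T+1) - xstar)]
  -- Jensen
  have hFconv : ConvexOn ℝ Set.univ F := by
    have : F = ∑ i, f i := by ext z; simp [hFdef]
    rw [this]
    exact Finset.sum_induction f _ (fun a b ha hb => ha.add hb)
      (convexOn_const 0 convex_univ) (fun i _ => hconv i)
  have hw : ∀ t ∈ Finset.range (T+1), (0:ℝ) ≤ α t / S :=
    fun t _ => le_of_lt (div_pos (hα t) hApos)
  have hw1 : ∑ t ∈ Finset.range (T+1), α t / S = 1 := by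
    rw [← Finset.sum_div, ← hSdef, div_self hAne]
  have hyhat : S⁻¹ * ∑ t ∈ Finset.range (T+1), α t * y t
      = ∑ t ∈ Finset.range (T+1), (α t / S) • y t := by
    rw [Finset.mul_sum]
    apply Finset.sum_congr rfl
    intro t _
    rw [smul_eq_mul]; ring
  have hJ : F (S⁻¹ * ∑ t ∈ Finset.range (T+1), α t * y t)
      ≤ ∑ t ∈ Finset.range (T+1), (α t / S) * F (y t) := by
    rw [hyhat]
    simpa using hFconv.map_sum_le hw hw1 (fun t _ => Set.mem_univ _)
  have hJ2 : F (S⁻¹ * ∑ t ∈ Finset.range (T+1), α t * y t) - F xstar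
      ≤ S⁻¹ * ∑ t ∈ Finset.range (T+1), α t * (F (y t) - F xstar) := by
    have e1 : S⁻¹ * ∑ t ∈ Finset.range (T+1), α t * (F (y t) - F xstar)
        = (∑ t ∈ Finset.range (T+1), (α t / S) * F (y t)) - F xstar := by
      rw [Finset.mul_sum]
      rw [show ∑ t ∈ Finset.range (T+1), S⁻¹ * (α t * (F (y t) - F xstar))
          = ∑ t ∈ Finset.range (T+1), ((α t / S) * F (y t) - (α t / S) * F xstar) from
        Finset.sum_congr rfl (fun t _ => by ring)]
      rw [Finset.sum_sub_distrib, ← Finset.sum_mul, hw1, one_mul]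
    linarith [hJ]
  have final : F (S⁻¹ * ∑ t ∈ Finset.range (T+1), α t * y t) - F xstar
      ≤ S⁻¹ * (N/2*(y 0 - xstar)^2 + N*L^2/2 * (∑ t ∈ Finset.range (T+1), (α t)^2)
        + 2*L*(∑ t ∈ Finset.range (T+1), α t * ∑ i, |y t - x i t|)) := by
    refine hJ2.trans ?_
    exact mul_le_mul_of_nonneg_left sum_step (inv_nonneg.mpr hApos.le)
  have eq2 : ∀ P Q R : ℝ, S⁻¹ * (N/2*P + N*L^2/2*Q + 2*L*R)
      = (N*P + N*L^2*Q)/(2*S) + (2*L/S)*R := by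
    intro P Q R
    field_simp
  calc ∑ i, f i (S⁻¹ * ∑ t ∈ Finset.range (T + 1), α t * y t) - ∑ i, f i xstar
      = F (S⁻¹ * ∑ t ∈ Finset.range (T+1), α t * y t) - F xstar := rfl
    _ ≤ _ := final
    _ = _ := eq2 _ _ _
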